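/- arXiv:1905.09256 — 2 statements merged into one kernel-verified Lean document; each statement's English description precedes it below -/
import Mathlib

section
/- Let FG_X be the free group on the set X, regarded as an X-generated group via the canonical inclusion. Then F(FG_X) is a free X-generated F-inverse monoid: for every F-inverse monoid T and every map f : X → T there is a unique morphism of F-inverse monoids (preserving ·, ⁻¹, m and 1) from F(FG_X) to T sending (Γ_x, x) to f(x) for every x ∈ X. -/
namespace FInvPaper

universe u v w

section Generic
variable {S : Type u}

/-- The natural partial order on an inverse monoid: `a ≤ b` iff `a = b·e` for some idempotent. -/
def nle [Mul S] (a b : S) : Prop := ∃ e : S, e * e = e ∧ a = b * e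

/-- The minimum group congruence σ: `a σ b` iff `a·e = b·e` for some idempotent `e`. -/
def sigma [Mul S] (a b : S) : Prop := ∃ e : S, e * e = e ∧ a * e = b * e

/-- `m` assigns to every element the maximum element of its σ-class. -/
def IsMaxOp [Mul S] (m : S → S) : Prop :=
  ∀ a : S, sigma (m a) a ∧ ∀ b : S, sigma b a → nle b (m a)

/-- A subset of `S` which is an entire σ-class. -/
def IsSigmaClass [Mul S] (A : Set S) : Prop := ∃ a : S, A = {b : S | sigma b a}

end Generic

/-- Inverse monoids: monoids with an involution satisfying `a·a⁻¹·a = a`, `(a·b)⁻¹ = b⁻¹·a⁻¹`,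
in which all idempotents commute. -/
class InverseMonoid (S : Type u) extends Monoid S, Inv S where
  inv_inv : ∀ a : S, a⁻¹⁻¹ = a
  mul_inv_rev : ∀ a b : S, (a * b)⁻¹ = b⁻¹ * a⁻¹
  mul_inv_self_mul : ∀ a : S, a * a⁻¹ * a = a
  idem_comm : ∀ e f : S, e * e = e → f * f = f → e * f = f * e

/-- F-inverse monoids in the enriched signature `(·, ⁻¹, ᵐ, 1)`. -/
class FInverseMonoid (S : Type u) extends InverseMonoid S where
  mx : S → S
  mx_isMaxOp : IsMaxOp mx

/-- The max-operation of an F-inverse monoid. -/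
def mx {S : Type u} [FInverseMonoid S] : S → S := FInverseMonoid.mx

section InverseMonoidLemmas

variable {S : Type u} [InverseMonoid S]

lemma mul_inv_idem (a : S) : (a * a⁻¹) * (a * a⁻¹) = a * a⁻¹ := by
  conv_lhs => rw [← mul_assoc, InverseMonoid.mul_inv_self_mul]

lemma inv_mul_self_mul (a : S) : a⁻¹ * a * a⁻¹ = a⁻¹ := by
  have h := InverseMonoid.mul_inv_self_mul (a := a⁻¹)
  rwa [InverseMonoid.inv_inv] at h

lemma inv_mul_idem (a : S) : (a⁻¹ * a) * (a⁻¹ * a) = a⁻¹ * a := by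
  conv_lhs => rw [← mul_assoc, inv_mul_self_mul]

lemma idem_inv {e : S} (he : e * e = e) : e⁻¹ = e := by
  have h1 : e⁻¹ * e⁻¹ = e⁻¹ := by rw [← InverseMonoid.mul_inv_rev, he]
  have hc : e * e⁻¹ = e⁻¹ * e := InverseMonoid.idem_comm e e⁻¹ he h1
  have h2 : e = e * e⁻¹ := by
    calc e = e * e⁻¹ * e := (InverseMonoid.mul_inv_self_mul e).symm
    _ = e * (e⁻¹ * e) := mul_assoc _ _ _
    _ = e * (e * e⁻¹) := by rw [hc]
    _ = e * e * e⁻¹ := (mul_assoc _ _ _).symm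
    _ = e * e⁻¹ := by rw [he]
  have h3 : e⁻¹ = e⁻¹ * e := by
    calc e⁻¹ = e⁻¹ * e * e⁻¹ := (inv_mul_self_mul e).symm
    _ = e⁻¹ * (e * e⁻¹) := mul_assoc _ _ _
    _ = e⁻¹ * (e⁻¹ * e) := by rw [hc]
    _ = e⁻¹ * e⁻¹ * e := (mul_assoc _ _ _).symm
    _ = e⁻¹ * e := by rw [h1]
  rw [h3, ← hc, ← h2]

lemma idem_mul_idem {e f : S} (he : e * e = e) (hf : f * f = f) :
    (e * f) * (e * f) = e * f := by
  calc (e * f) * (e * f) = e * (f * (e * f)) := mul_assoc _ _ _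
  _ = e * (f * e * f) := by rw [← mul_assoc f e f]
  _ = e * (e * f * f) := by rw [← InverseMonoid.idem_comm e f he hf]
  _ = e * (e * (f * f)) := by rw [mul_assoc e f f]
  _ = e * (e * f) := by rw [hf]
  _ = e * e * f := (mul_assoc _ _ _).symm
  _ = e * f := by rw [he]

lemma sigma_refl (a : S) : sigma a a := ⟨1, one_mul 1, rfl⟩

lemma sigma_symm {a b : S} (h : sigma a b) : sigma b a := by
  obtain ⟨e, he, hab⟩ := h
  exact ⟨e, he, hab.symm⟩

lemma sigma_trans {a b c : S} (h₁ : sigma a b) (h₂ : sigma b c) : sigma a c := by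
  obtain ⟨e, he, h1⟩ := h₁
  obtain ⟨f, hf, h2⟩ := h₂
  refine ⟨e * f, idem_mul_idem he hf, ?_⟩
  calc a * (e * f) = a * e * f := (mul_assoc _ _ _).symm
  _ = b * e * f := by rw [h1]
  _ = b * (e * f) := mul_assoc _ _ _
  _ = b * (f * e) := by rw [InverseMonoid.idem_comm e f he hf]
  _ = b * f * e := (mul_assoc _ _ _).symm
  _ = c * f * e := by rw [h2]
  _ = c * (f * e) := mul_assoc _ _ _
  _ = c * (e * f) := by rw [InverseMonoid.idem_comm e f he hf]

lemma sigma_mul_left {a b : S} (c : S) (h : sigma a b) : sigma (c * a) (c * b) := by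
  obtain ⟨e, he, hab⟩ := h
  exact ⟨e, he, by rw [mul_assoc, hab, ← mul_assoc]⟩

lemma inner_lemma {e : S} (he : e * e = e) (a : S) :
    a⁻¹ * (a * e * a⁻¹) = e * a⁻¹ := by
  calc a⁻¹ * (a * e * a⁻¹) = a⁻¹ * (a * e) * a⁻¹ := by rw [← mul_assoc a⁻¹ (a * e) a⁻¹]
  _ = a⁻¹ * a * e * a⁻¹ := by rw [← mul_assoc a⁻¹ a e]
  _ = e * (a⁻¹ * a) * a⁻¹ := by rw [InverseMonoid.idem_comm (a⁻¹ * a) e (inv_mul_idem a) he]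
  _ = e * (a⁻¹ * a * a⁻¹) := by rw [mul_assoc e (a⁻¹ * a) a⁻¹]
  _ = e * a⁻¹ := by rw [inv_mul_self_mul]

lemma sigma_inv {a b : S} (h : sigma a b) : sigma a⁻¹ b⁻¹ := by
  obtain ⟨e, he, hab⟩ := h
  have key5 : e * a⁻¹ = e * b⁻¹ := by
    have h' : (a * e)⁻¹ = (b * e)⁻¹ := by rw [hab]
    rwa [InverseMonoid.mul_inv_rev, InverseMonoid.mul_inv_rev, idem_inv he] at h'
  have key1 : (a * e * a⁻¹) * (a * e * a⁻¹) = a * e * a⁻¹ := by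
    calc (a * e * a⁻¹) * (a * e * a⁻¹) = a * e * (a⁻¹ * (a * e * a⁻¹)) := mul_assoc _ _ _
    _ = a * e * (e * a⁻¹) := by rw [inner_lemma he a]
    _ = a * e * e * a⁻¹ := (mul_assoc _ _ _).symm
    _ = a * (e * e) * a⁻¹ := by rw [mul_assoc a e e]
    _ = a * e * a⁻¹ := by rw [he]
  have key3 : a * e * a⁻¹ = b * e * b⁻¹ := by
    calc a * e * a⁻¹ = a * (e * e) * a⁻¹ := by rw [he]
    _ = a * e * e * a⁻¹ := by rw [← mul_assoc a e e]
    _ = a * e * (e * a⁻¹) := mul_assoc _ _ _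
    _ = a * e * (e * b⁻¹) := by rw [key5]
    _ = b * e * (e * b⁻¹) := by rw [hab]
    _ = b * e * e * b⁻¹ := (mul_assoc _ _ _).symm
    _ = b * (e * e) * b⁻¹ := by rw [mul_assoc b e e]
    _ = b * e * b⁻¹ := by rw [he]
  refine ⟨a * e * a⁻¹, key1, ?_⟩
  rw [inner_lemma he a, key5, key3, inner_lemma he b]

lemma sigma_mul_right {a b : S} (c : S) (h : sigma a b) : sigma (a * c) (b * c) := by
  have h1 := sigma_mul_left c⁻¹ (sigma_inv h)
  have h2 := sigma_inv h1
  rwa [InverseMonoid.mul_inv_rev c⁻¹ a⁻¹, InverseMonoid.mul_inv_rev c⁻¹ b⁻¹,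
    InverseMonoid.inv_inv, InverseMonoid.inv_inv, InverseMonoid.inv_inv] at h2

instance sigmaSetoid (S : Type u) [InverseMonoid S] : Setoid S where
  r := sigma
  iseqv := ⟨sigma_refl, sigma_symm, sigma_trans⟩

/-- The maximum group quotient `S/σ`. -/
def GQuot (S : Type u) [InverseMonoid S] : Type u := Quotient (sigmaSetoid S)

/-- The σ-class of an element, as an element of the maximum group quotient. -/
def σclass {S : Type u} [InverseMonoid S] (a : S) : GQuot S := Quotient.mk (sigmaSetoid S) a

instance (S : Type u) [InverseMonoid S] : Group (GQuot S) where
  mul := Quotient.map₂ (· * ·) (fun _ _ h₁ _ _ h₂ =>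
    sigma_trans (sigma_mul_right _ h₁) (sigma_mul_left _ h₂))
  one := σclass 1
  inv := Quotient.map (·⁻¹) (fun _ _ h => sigma_inv h)
  mul_assoc := by
    intro a b c
    induction a using Quotient.ind
    induction b using Quotient.ind
    induction c using Quotient.ind
    exact congrArg (Quotient.mk _) (mul_assoc _ _ _)
  one_mul := by
    intro a
    induction a using Quotient.ind
    exact congrArg (Quotient.mk _) (one_mul _)
  mul_one := by
    intro a
    induction a using Quotient.ind
    exact congrArg (Quotient.mk _) (mul_one _)
  inv_mul_cancel := by
    intro a
    induction a using Quotient.ind with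
    | _ a =>
      refine Quotient.sound ⟨a⁻¹ * a, inv_mul_idem a, ?_⟩
      rw [one_mul]
      exact inv_mul_idem a

end InverseMonoidLemmas


section Graphs

variable {G : Type u} [Group G] {X : Type v}

/-- A subgraph of the Cayley graph `Cay(G)` of the `X`-generated group `G` (with assignment
mapping `φ : X → G`), represented by its set of vertices and its set of positive edges:
the positive edge `(g, x)` goes from `g` to `g * φ x` and carries the label `x`; every
subgraph closed under edge inversion is uniquely determined by this data. -/
structure Subgraph (φ : X → G) : Type (max u v) where
  verts : Set G
  edges : Set (G × X)
  src_mem : ∀ e ∈ edges, Prod.fst e ∈ verts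
  tgt_mem : ∀ e ∈ edges, e.1 * φ e.2 ∈ verts

namespace Subgraph

variable {φ : X → G}

lemma ext' {Γ Δ : Subgraph φ} (hv : Γ.verts = Δ.verts) (he : Γ.edges = Δ.edges) : Γ = Δ := by
  cases Γ; cases Δ; cases hv; cases he; rfl

/-- Union of subgraphs. -/
def union (Γ Δ : Subgraph φ) : Subgraph φ where
  verts := Γ.verts ∪ Δ.verts
  edges := Γ.edges ∪ Δ.edges
  src_mem := by
    intro e he
    rcases he with h | h
    · exact Set.mem_union_left _ (Γ.src_mem e h)
    · exact Set.mem_union_right _ (Δ.src_mem e h)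
  tgt_mem := by
    intro e he
    rcases he with h | h
    · exact Set.mem_union_left _ (Γ.tgt_mem e h)
    · exact Set.mem_union_right _ (Δ.tgt_mem e h)

instance : Union (Subgraph φ) := ⟨union⟩

@[simp] lemma union_verts (Γ Δ : Subgraph φ) : (Γ ∪ Δ).verts = Γ.verts ∪ Δ.verts := rfl
@[simp] lemma union_edges (Γ Δ : Subgraph φ) : (Γ ∪ Δ).edges = Γ.edges ∪ Δ.edges := rfl

/-- Left translation of a subgraph by a group element. -/
def smul (g : G) (Γ : Subgraph φ) : Subgraph φ where
  verts := (g * ·) '' Γ.verts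
  edges := (fun e => (g * e.1, e.2)) '' Γ.edges
  src_mem := by
    rintro e ⟨e', he', rfl⟩
    exact ⟨e'.1, Γ.src_mem e' he', rfl⟩
  tgt_mem := by
    rintro e ⟨e', he', rfl⟩
    exact ⟨e'.1 * φ e'.2, Γ.tgt_mem e' he', (mul_assoc g e'.1 (φ e'.2)).symm⟩

instance : SMul G (Subgraph φ) := ⟨smul⟩

@[simp] lemma smul_verts (g : G) (Γ : Subgraph φ) : (g • Γ).verts = (g * ·) '' Γ.verts := rfl
@[simp] lemma smul_edges (g : G) (Γ : Subgraph φ) :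
    (g • Γ).edges = (fun e : G × X => (g * e.1, e.2)) '' Γ.edges := rfl

/-- The subgraph relation. -/
instance : HasSubset (Subgraph φ) := ⟨fun Γ Δ => Γ.verts ⊆ Δ.verts ∧ Γ.edges ⊆ Δ.edges⟩

lemma subset_iff (Γ Δ : Subgraph φ) : Γ ⊆ Δ ↔ Γ.verts ⊆ Δ.verts ∧ Γ.edges ⊆ Δ.edges := Iff.rfl

/-- Finiteness of a subgraph. -/
def IsFinite (Γ : Subgraph φ) : Prop := Γ.verts.Finite ∧ Γ.edges.Finite

/-- A subgraph has no isolated vertices if each of its vertices is an endpoint of one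
of its edges. -/
def NoIsolated (Γ : Subgraph φ) : Prop :=
  ∀ v ∈ Γ.verts, ∃ e ∈ Γ.edges, v = e.1 ∨ v = e.1 * φ e.2

/-- `Ed(Γ)`: the subgraph spanned by the edges of `Γ`, i.e. `Γ` with all isolated vertices
removed. -/
def ed (Γ : Subgraph φ) : Subgraph φ where
  verts := {v | ∃ e ∈ Γ.edges, v = e.1 ∨ v = e.1 * φ e.2}
  edges := Γ.edges
  src_mem := fun e he => ⟨e, he, Or.inl rfl⟩
  tgt_mem := fun e he => ⟨e, he, Or.inr rfl⟩

lemma ed_finite {Γ : Subgraph φ} (h : Γ.IsFinite) : Γ.ed.IsFinite := by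
  constructor
  · have hsub : Γ.ed.verts ⊆
        (fun e : G × X => e.1) '' Γ.edges ∪ (fun e : G × X => e.1 * φ e.2) '' Γ.edges := by
      rintro v ⟨e, he, rfl | rfl⟩
      · exact Set.mem_union_left _ ⟨e, he, rfl⟩
      · exact Set.mem_union_right _ ⟨e, he, rfl⟩
    exact ((h.2.image _).union (h.2.image _)).subset hsub
  · exact h.2

lemma ed_noIsolated (Γ : Subgraph φ) : Γ.ed.NoIsolated := fun _ hv => hv

end Subgraph

open Subgraph

variable {φ : X → G}

/-- The subgraph with the single vertex `g` and no edges. -/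
def vertexG (φ : X → G) (g : G) : Subgraph φ :=
  ⟨{g}, ∅, by simp, by simp⟩

/-- `Δ_g`: the edgeless subgraph with vertices `1` and `g`. -/
def deltaG (φ : X → G) (g : G) : Subgraph φ :=
  ⟨{1, g}, ∅, by simp, by simp⟩

/-- The subgraph spanned by a single (positive) edge. -/
def edgeG (φ : X → G) (e : G × X) : Subgraph φ where
  verts := {e.1, e.1 * φ e.2}
  edges := {e}
  src_mem := by
    intro e' he'
    rw [Set.mem_singleton_iff] at he'
    subst he'
    exact Set.mem_insert _ _
  tgt_mem := by
    intro e' he'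
    rw [Set.mem_singleton_iff] at he'
    subst he'
    exact Set.mem_insert_of_mem _ rfl

/-- The empty subgraph. -/
def emptyG (φ : X → G) : Subgraph φ := ⟨∅, ∅, by simp, by simp⟩

lemma edgeG_noIsolated (φ : X → G) (e : G × X) : (edgeG φ e).NoIsolated := by
  intro v hv
  refine ⟨e, Set.mem_singleton e, ?_⟩
  simpa [edgeG] using hv

/-- Two vertices are adjacent in `Γ` if they are connected by an edge of `Γ`. -/
def adj (Γ : Subgraph φ) (u v : G) : Prop :=
  ∃ e ∈ Γ.edges, (u = e.1 ∧ v = e.1 * φ e.2) ∨ (v = e.1 ∧ u = e.1 * φ e.2)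

/-- A subgraph is connected if any two of its vertices are joined by a path running in it. -/
def Connected (Γ : Subgraph φ) : Prop :=
  ∀ u ∈ Γ.verts, ∀ v ∈ Γ.verts, Relation.ReflTransGen (adj Γ) u v

lemma adj_mono {Γ Δ : Subgraph φ} (h : Γ.edges ⊆ Δ.edges) {u v : G} (ha : adj Γ u v) :
    adj Δ u v := by
  obtain ⟨e, he, hc⟩ := ha
  exact ⟨e, h he, hc⟩

lemma Connected.union {Γ Δ : Subgraph φ} (hΓ : Connected Γ) (hΔ : Connected Δ) (w : G)
    (hw₁ : w ∈ Γ.verts) (hw₂ : w ∈ Δ.verts) : Connected (Γ ∪ Δ) := by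
  have hsΓ : Γ.edges ⊆ (Γ ∪ Δ).edges := by
    rw [union_edges]; exact Set.subset_union_left
  have hsΔ : Δ.edges ⊆ (Γ ∪ Δ).edges := by
    rw [union_edges]; exact Set.subset_union_right
  have mΓ : ∀ {p q : G}, Relation.ReflTransGen (adj Γ) p q →
      Relation.ReflTransGen (adj (Γ ∪ Δ)) p q :=
    fun h => Relation.ReflTransGen.mono (fun _ _ h' => adj_mono hsΓ h') _ _ h
  have mΔ : ∀ {p q : G}, Relation.ReflTransGen (adj Δ) p q →
      Relation.ReflTransGen (adj (Γ ∪ Δ)) p q :=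
    fun h => Relation.ReflTransGen.mono (fun _ _ h' => adj_mono hsΔ h') _ _ h
  intro u hu v hv
  rw [union_verts] at hu hv
  rcases hu with hu | hu <;> rcases hv with hv | hv
  · exact mΓ (hΓ u hu v hv)
  · exact (mΓ (hΓ u hu w hw₁)).trans (mΔ (hΔ w hw₂ v hv))
  · exact (mΔ (hΔ u hu w hw₂)).trans (mΓ (hΓ w hw₁ v hv))
  · exact mΔ (hΔ u hu v hv)

lemma Connected.smul {Γ : Subgraph φ} (g : G) (h : Connected Γ) : Connected (g • Γ) := by
  intro u hu v hv
  rw [smul_verts] at hu hv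
  obtain ⟨u', hu', rfl⟩ := hu
  obtain ⟨v', hv', rfl⟩ := hv
  refine Relation.ReflTransGen.lift (fun z => g * z) ?_ _ _ (h u' hu' v' hv')
  rintro p q ⟨e, he, hc⟩
  show adj (g • Γ) (g * p) (g * q)
  refine ⟨(g * e.1, e.2), ?_, ?_⟩
  · rw [smul_edges]; exact ⟨e, he, rfl⟩
  · rcases hc with ⟨rfl, rfl⟩ | ⟨rfl, rfl⟩
    · exact Or.inl ⟨rfl, (mul_assoc _ _ _).symm⟩
    · exact Or.inr ⟨rfl, (mul_assoc _ _ _).symm⟩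

lemma Subgraph.NoIsolated.union {Γ Δ : Subgraph φ} (hΓ : Γ.NoIsolated) (hΔ : Δ.NoIsolated) :
    (Γ ∪ Δ).NoIsolated := by
  intro v hv
  rw [union_verts] at hv
  rcases hv with hv | hv
  · obtain ⟨e, he, hor⟩ := hΓ v hv
    exact ⟨e, by rw [union_edges]; exact Set.mem_union_left _ he, hor⟩
  · obtain ⟨e, he, hor⟩ := hΔ v hv
    exact ⟨e, by rw [union_edges]; exact Set.mem_union_right _ he, hor⟩

lemma Subgraph.NoIsolated.smul {Γ : Subgraph φ} (g : G) (h : Γ.NoIsolated) :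
    (g • Γ).NoIsolated := by
  intro v hv
  rw [smul_verts] at hv
  obtain ⟨u, hu, rfl⟩ := hv
  obtain ⟨e, he, hor⟩ := h u hu
  refine ⟨(g * e.1, e.2), by rw [smul_edges]; exact ⟨e, he, rfl⟩, ?_⟩
  rcases hor with rfl | rfl
  · exact Or.inl rfl
  · exact Or.inr (mul_assoc _ _ _).symm

end Graphs


section Expansions

variable {G : Type u} [Group G] {X : Type v} {φ : X → G}

open Subgraph

/-- `F(G)`: pairs `(Γ, g)` where `Γ` is a finite subgraph of `Cay(G)` having `1` and `g`
among its vertices. -/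
structure FExp (φ : X → G) : Type (max u v) where
  graph : Subgraph φ
  elt : G
  finite : graph.IsFinite
  one_mem : (1 : G) ∈ graph.verts
  elt_mem : elt ∈ graph.verts

namespace FExp

lemma ext' {a b : FExp φ} (hg : a.graph = b.graph) (he : a.elt = b.elt) : a = b := by
  cases a; cases b; cases hg; cases he; rfl

instance : Mul (FExp φ) :=
  ⟨fun a b =>
    { graph := a.graph ∪ a.elt • b.graph
      elt := a.elt * b.elt
      finite := ⟨by
          rw [union_verts, smul_verts]
          exact a.finite.1.union (b.finite.1.image _),
        by
          rw [union_edges, smul_edges]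
          exact a.finite.2.union (b.finite.2.image _)⟩
      one_mem := by
        rw [union_verts]
        exact Set.mem_union_left _ a.one_mem
      elt_mem := by
        rw [union_verts]
        refine Set.mem_union_right _ ?_
        rw [smul_verts]
        exact ⟨b.elt, b.elt_mem, rfl⟩ }⟩

@[simp] lemma mul_graph (a b : FExp φ) : (a * b).graph = a.graph ∪ a.elt • b.graph := rfl
@[simp] lemma mul_elt (a b : FExp φ) : (a * b).elt = a.elt * b.elt := rfl

instance : One (FExp φ) :=
  ⟨{ graph := deltaG φ 1
     elt := 1
     finite := ⟨(Set.finite_singleton (1 : G)).insert 1, Set.finite_empty⟩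
     one_mem := Set.mem_insert 1 _
     elt_mem := Set.mem_insert 1 _ }⟩

@[simp] lemma one_graph : (1 : FExp φ).graph = deltaG φ 1 := rfl
@[simp] lemma one_elt : (1 : FExp φ).elt = 1 := rfl

instance : Inv (FExp φ) :=
  ⟨fun a =>
    { graph := a.elt⁻¹ • a.graph
      elt := a.elt⁻¹
      finite := ⟨by rw [smul_verts]; exact a.finite.1.image _,
        by rw [smul_edges]; exact a.finite.2.image _⟩
      one_mem := by
        rw [smul_verts]
        exact ⟨a.elt, a.elt_mem, inv_mul_cancel a.elt⟩
      elt_mem := by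
        rw [smul_verts]
        exact ⟨1, a.one_mem, mul_one _⟩ }⟩

@[simp] lemma inv_graph (a : FExp φ) : (a⁻¹).graph = a.elt⁻¹ • a.graph := rfl
@[simp] lemma inv_elt (a : FExp φ) : (a⁻¹).elt = a.elt⁻¹ := rfl

end FExp

/-- The element `(Δ_g, g)` of `F(G)`. -/
def maxElt (φ : X → G) (g : G) : FExp φ where
  graph := deltaG φ g
  elt := g
  finite := ⟨(Set.finite_singleton g).insert 1, Set.finite_empty⟩
  one_mem := Set.mem_insert 1 _
  elt_mem := Set.mem_insert_of_mem _ rfl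

/-- The max-operation `(Γ, g) ↦ (Δ_g, g)` on `F(G)`. -/
def mxOp (a : FExp φ) : FExp φ := maxElt φ a.elt

/-- The generator `(Γ_x, x_G)` of `F(G)`. -/
def genElt (φ : X → G) (x : X) : FExp φ where
  graph := edgeG φ (1, x)
  elt := φ x
  finite := ⟨(Set.finite_singleton _).insert _, Set.finite_singleton _⟩
  one_mem := Set.mem_insert 1 _
  elt_mem := by simp [edgeG]

/-- `M(G)`: the Margolis–Meakin expansion; pairs `(Γ, g)` where `Γ` is a finite *connected*
subgraph of `Cay(G)` having `1` and `g` among its vertices. -/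
structure MExp (φ : X → G) : Type (max u v) where
  graph : Subgraph φ
  elt : G
  finite : graph.IsFinite
  connected : Connected graph
  one_mem : (1 : G) ∈ graph.verts
  elt_mem : elt ∈ graph.verts

namespace MExp

instance : Mul (MExp φ) :=
  ⟨fun a b =>
    { graph := a.graph ∪ a.elt • b.graph
      elt := a.elt * b.elt
      finite := ⟨by
          rw [union_verts, smul_verts]
          exact a.finite.1.union (b.finite.1.image _),
        by
          rw [union_edges, smul_edges]
          exact a.finite.2.union (b.finite.2.image _)⟩
      connected := by
        refine Connected.union a.connected (Connected.smul a.elt b.connected) a.elt a.elt_mem ?_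
        rw [smul_verts]
        exact ⟨1, b.one_mem, mul_one _⟩
      one_mem := by
        rw [union_verts]
        exact Set.mem_union_left _ a.one_mem
      elt_mem := by
        rw [union_verts]
        refine Set.mem_union_right _ ?_
        rw [smul_verts]
        exact ⟨b.elt, b.elt_mem, rfl⟩ }⟩

end MExp

/-- `P(G)`: pairs `(Γ, g)` where `Γ` is a finite subgraph of `Cay(G)` without isolated
vertices and `g ∈ G` (a model of the semidirect product of the semilattice of such
subgraphs by `G`). -/
structure PExp (φ : X → G) : Type (max u v) where
  graph : Subgraph φ
  elt : G
  finite : graph.IsFinite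
  noIsolated : graph.NoIsolated

namespace PExp

lemma ext' {a b : PExp φ} (hg : a.graph = b.graph) (he : a.elt = b.elt) : a = b := by
  cases a; cases b; cases hg; cases he; rfl

instance : Mul (PExp φ) :=
  ⟨fun a b =>
    { graph := a.graph ∪ a.elt • b.graph
      elt := a.elt * b.elt
      finite := ⟨by
          rw [union_verts, smul_verts]
          exact a.finite.1.union (b.finite.1.image _),
        by
          rw [union_edges, smul_edges]
          exact a.finite.2.union (b.finite.2.image _)⟩
      noIsolated := a.noIsolated.union (b.noIsolated.smul a.elt) }⟩

@[simp] lemma mul_graph (a b : PExp φ) : (a * b).graph = a.graph ∪ a.elt • b.graph := rfl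
@[simp] lemma mul_elt (a b : PExp φ) : (a * b).elt = a.elt * b.elt := rfl

instance : One (PExp φ) :=
  ⟨{ graph := emptyG φ
     elt := 1
     finite := ⟨Set.finite_empty, Set.finite_empty⟩
     noIsolated := by intro v hv; simp [emptyG] at hv }⟩

@[simp] lemma one_graph : (1 : PExp φ).graph = emptyG φ := rfl
@[simp] lemma one_elt : (1 : PExp φ).elt = 1 := rfl

instance : Inv (PExp φ) :=
  ⟨fun a =>
    { graph := a.elt⁻¹ • a.graph
      elt := a.elt⁻¹
      finite := ⟨by rw [smul_verts]; exact a.finite.1.image _,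
        by rw [smul_edges]; exact a.finite.2.image _⟩
      noIsolated := a.noIsolated.smul _ }⟩

@[simp] lemma inv_graph (a : PExp φ) : (a⁻¹).graph = a.elt⁻¹ • a.graph := rfl
@[simp] lemma inv_elt (a : PExp φ) : (a⁻¹).elt = a.elt⁻¹ := rfl

end PExp

/-- The max-operation `(Γ, g) ↦ (∅, g)` on `P(G)`. -/
def pMax (a : PExp φ) : PExp φ where
  graph := emptyG φ
  elt := a.elt
  finite := ⟨Set.finite_empty, Set.finite_empty⟩
  noIsolated := by intro v hv; simp [emptyG] at hv

/-- The generator `(Γ_x, x_G)` of `P(G)`. -/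
def genEltP (φ : X → G) (x : X) : PExp φ where
  graph := edgeG φ (1, x)
  elt := φ x
  finite := ⟨(Set.finite_singleton _).insert _, Set.finite_singleton _⟩
  noIsolated := edgeG_noIsolated φ (1, x)

/-- The canonical map `F(G) → P(G)`, `(Γ, g) ↦ (Ed(Γ), g)`. -/
def edMap (a : FExp φ) : PExp φ where
  graph := a.graph.ed
  elt := a.elt
  finite := ed_finite a.finite
  noIsolated := a.graph.ed_noIsolated

/-- The relation `θ` on `F(G)`: `(Γ,g) θ (Ξ,h)` iff `g = h` and `Ed(Γ) = Ed(Ξ)`. -/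
def thetaRel (φ : X → G) (a b : FExp φ) : Prop := a.elt = b.elt ∧ a.graph.ed = b.graph.ed

end Expansions

section Terms

variable {X : Type v}

/-- Terms of the term algebra `I^m_X` in their (unique) normal form
`u₀ · m(v₁) · u₁ ⋯ u_{n-1} · m(vₙ) · uₙ` with `uᵢ, vⱼ` words in the free monoid with
involution `I_X` on `X` (represented as lists over `X ⊕ X`, where `inl x` stands for `x`
and `inr x` for `x⁻¹`): the first component is `u₀`, and the second lists the pairs
`(vᵢ, uᵢ)`. -/
abbrev MTerm (X : Type v) := List (X ⊕ X) × List (List (X ⊕ X) × List (X ⊕ X))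

/-- Value of a letter of `X ⊔ X⁻¹`. -/
def letterVal {M : Type w} [Monoid M] [Inv M] (f : X → M) : X ⊕ X → M
  | Sum.inl x => f x
  | Sum.inr x => (f x)⁻¹

/-- Value of a word of `I_X`. -/
def wordVal {M : Type w} [Monoid M] [Inv M] (f : X → M) (u : List (X ⊕ X)) : M :=
  (u.map (letterVal f)).prod

/-- Value `[t]` of a term `t ∈ I^m_X` under the assignment `f` of the generators,
where `mop` is interpreted as the operation `m`. -/
def termVal {M : Type w} [Monoid M] [Inv M] (f : X → M) (mop : M → M) (t : MTerm X) : M :=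
  wordVal f t.1 * (t.2.map (fun p => mop (wordVal f p.1) * wordVal f p.2)).prod

end Terms

section Journeys

variable {G : Type u} [Group G] {X : Type v}

/-- The subgraph of `Cay(G)` spanned by the path starting at `g` with label the given word;
for the empty word it is the single vertex `g`. -/
def pathGraph (φ : X → G) : G → List (X ⊕ X) → Subgraph φ
  | g, [] => vertexG φ g
  | g, Sum.inl x :: u => edgeG φ (g, x) ∪ pathGraph φ (g * φ x) u
  | g, Sum.inr x :: u => edgeG φ (g * (φ x)⁻¹, x) ∪ pathGraph φ (g * (φ x)⁻¹) u

/-- The subgraph of `Cay(G)` spanned by the journey `j_g(w)` induced by the term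
`w = u₀ · m(v₁) · u₁ ⋯ · m(vₙ) · uₙ` starting at `g`: traverse the path labelled `u₀`
from `g`, jump to `g·[u₀v₁]`, traverse the path labelled `u₁`, and so on. -/
def journeyGraph (φ : X → G) : G → List (X ⊕ X) → List (List (X ⊕ X) × List (X ⊕ X)) →
    Subgraph φ
  | g, u, [] => pathGraph φ g u
  | g, u, (v, u') :: rest =>
      pathGraph φ g u ∪ journeyGraph φ (g * wordVal φ u * wordVal φ v) u' rest

end Journeys

section AuxCore

variable {S : Type u} [InverseMonoid S]

lemma im_inv_one : ((1 : S))⁻¹ = 1 := idem_inv (one_mul 1)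

lemma swap_idem (x : S) {e f : S} (he : e * e = e) (hf : f * f = f) :
    x * e * f = x * f * e := by
  rw [mul_assoc, InverseMonoid.idem_comm e f he hf, ← mul_assoc]

lemma absorb_idem (x : S) {e : S} (he : e * e = e) : x * e * e = x * e := by
  rw [mul_assoc, he]

lemma conj_idem (a : S) {e : S} (he : e * e = e) :
    (a * e * a⁻¹) * (a * e * a⁻¹) = a * e * a⁻¹ := by
  calc (a * e * a⁻¹) * (a * e * a⁻¹) = a * e * (a⁻¹ * (a * e * a⁻¹)) := by rw [mul_assoc]
  _ = a * e * (e * a⁻¹) := by rw [inner_lemma he]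
  _ = a * e * e * a⁻¹ := by rw [← mul_assoc]
  _ = a * e * a⁻¹ := by rw [absorb_idem _ he]

lemma conj_self (a : S) {e : S} (he : e * e = e) : a * e * a⁻¹ * a = a * e := by
  calc a * e * a⁻¹ * a = a * (e * (a⁻¹ * a)) := by rw [mul_assoc, mul_assoc]
  _ = a * ((a⁻¹ * a) * e) := by rw [InverseMonoid.idem_comm e (a⁻¹*a) he (inv_mul_idem a)]
  _ = a * (a⁻¹ * a) * e := by rw [← mul_assoc]
  _ = a * a⁻¹ * a * e := by rw [← mul_assoc]
  _ = a * e := by rw [InverseMonoid.mul_inv_self_mul]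

lemma conj_left (a : S) {e : S} (he : e * e = e) : e * a = a * (a⁻¹ * e * a) := by
  have : a * (a⁻¹ * e * a) = e * a := by
    calc a * (a⁻¹ * e * a) = a * (a⁻¹ * e) * a := by rw [← mul_assoc]
    _ = a * a⁻¹ * e * a := by rw [← mul_assoc]
    _ = e * (a * a⁻¹) * a := by rw [InverseMonoid.idem_comm (a*a⁻¹) e (mul_inv_idem a) he]
    _ = e * (a * a⁻¹ * a) := by rw [mul_assoc]
    _ = e * a := by rw [InverseMonoid.mul_inv_self_mul]
  exact this.symm

lemma triple_mid (x n : S) : x * n * n⁻¹ * n = x * n := by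
  rw [mul_assoc x n, mul_assoc x, InverseMonoid.mul_inv_self_mul]

lemma triple_mid' (x n : S) : x * n⁻¹ * n * n⁻¹ = x * n⁻¹ := by
  rw [mul_assoc x n⁻¹, mul_assoc x, inv_mul_self_mul]

lemma nle_antisymm {a b : S} (h1 : nle a b) (h2 : nle b a) : a = b := by
  obtain ⟨e, he, hae⟩ := h1
  obtain ⟨f, hf, hbf⟩ := h2
  have hb : b = b * (e * f) := by rw [← mul_assoc, ← hae, ← hbf]
  have hbe : b * e = b := by
    calc b * e = b * (e * f) * e := by rw [← hb]
    _ = b * ((e * f) * e) := by rw [mul_assoc]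
    _ = b * (e * (f * e)) := by rw [mul_assoc e f e]
    _ = b * (e * (e * f)) := by rw [InverseMonoid.idem_comm f e hf he]
    _ = b * (e * e * f) := by rw [← mul_assoc e e f]
    _ = b * (e * f) := by rw [he]
    _ = b := hb.symm
  rw [hae, hbe]

lemma eq_mul_inv_mul_of_nle {a b : S} (h : nle a b) : a = a * a⁻¹ * b := by
  obtain ⟨e, he, hae⟩ := h
  have h1 : a * a⁻¹ = b * e * b⁻¹ := by
    calc a * a⁻¹ = (b * e) * (b * e)⁻¹ := by rw [hae]
    _ = b * e * (e⁻¹ * b⁻¹) := by rw [InverseMonoid.mul_inv_rev]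
    _ = b * e * (e * b⁻¹) := by rw [idem_inv he]
    _ = b * e * e * b⁻¹ := by rw [← mul_assoc]
    _ = b * e * b⁻¹ := by rw [absorb_idem _ he]
  rw [h1, conj_self b he]
  exact hae

lemma nle_inv {a b : S} (h : nle a b) : nle a⁻¹ b⁻¹ := by
  obtain ⟨e, he, rfl⟩ := h
  exact ⟨b * e * b⁻¹, conj_idem b he, by
    rw [InverseMonoid.mul_inv_rev, idem_inv he, inner_lemma he]⟩

lemma sandwich_idem {e f : S} (he : e * e = e) (hf : f * f = f) : e * f * e = e * f := by
  rw [InverseMonoid.idem_comm e f he hf, absorb_idem f he,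
    InverseMonoid.idem_comm f e hf he]

end AuxCore
section AuxK

variable {S : Type u} [InverseMonoid S]

lemma lemK (m n p F : S) (hF : F * F = F) (h1 : nle (m * p) n) (h2 : nle (m⁻¹ * n) p) :
    n * F * n⁻¹ * (m * m⁻¹) = m * (p * F * p⁻¹) * m⁻¹ := by
  obtain ⟨e0, he0, hq⟩ := h1
  obtain ⟨e1, he1, hd⟩ := h2
  have hdinv : n⁻¹ * m = e1 * p⁻¹ := by
    have h := congrArg (·⁻¹) hd
    rwa [InverseMonoid.mul_inv_rev, InverseMonoid.inv_inv, InverseMonoid.mul_inv_rev,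
      idem_inv he1] at h
  have hPF : (p * F * p⁻¹) * (p * F * p⁻¹) = p * F * p⁻¹ := conj_idem p hF
  have hNF : (n * F * n⁻¹) * (n * F * n⁻¹) = n * F * n⁻¹ := conj_idem n hF
  have hMM := mul_inv_idem m
  have hNN := mul_inv_idem n
  have hB : (m * (p * F * p⁻¹) * m⁻¹) * (m * (p * F * p⁻¹) * m⁻¹) = m * (p * F * p⁻¹) * m⁻¹ :=
    conj_idem m hPF
  have hB1 : m * (p * F * p⁻¹) * m⁻¹ = n * F * e0 * n⁻¹ := by
    calc m * (p * F * p⁻¹) * m⁻¹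
        = m * p * (F * (p⁻¹ * m⁻¹)) := by simp only [← mul_assoc]
      _ = m * p * (F * (m * p)⁻¹) := by rw [InverseMonoid.mul_inv_rev]
      _ = n * e0 * (F * (n * e0)⁻¹) := by rw [hq]
      _ = n * e0 * (F * (e0⁻¹ * n⁻¹)) := by rw [InverseMonoid.mul_inv_rev]
      _ = n * e0 * (F * (e0 * n⁻¹)) := by rw [idem_inv he0]
      _ = n * e0 * F * e0 * n⁻¹ := by simp only [← mul_assoc]
      _ = n * F * e0 * e0 * n⁻¹ := by rw [swap_idem n he0 hF]
      _ = n * F * e0 * n⁻¹ := by rw [absorb_idem (n*F) he0]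
  have hBn : (n * F * e0 * n⁻¹) * (n * F * n⁻¹) = n * F * e0 * n⁻¹ := by
    calc (n * F * e0 * n⁻¹) * (n * F * n⁻¹)
        = n * F * e0 * (n⁻¹ * n) * F * n⁻¹ := by simp only [← mul_assoc]
      _ = n * F * e0 * F * (n⁻¹ * n) * n⁻¹ := by rw [swap_idem (n*F*e0) (inv_mul_idem n) hF]
      _ = n * F * F * e0 * (n⁻¹ * n) * n⁻¹ := by rw [swap_idem (n*F) he0 hF]
      _ = n * F * e0 * (n⁻¹ * n) * n⁻¹ := by rw [absorb_idem n hF]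
      _ = n * F * e0 * n⁻¹ * n * n⁻¹ := by simp only [← mul_assoc]
      _ = n * F * e0 * n⁻¹ := triple_mid' (n*F*e0) n
  have hBm : (m * (p * F * p⁻¹) * m⁻¹) * (m * m⁻¹) = m * (p * F * p⁻¹) * m⁻¹ := by
    calc (m * (p * F * p⁻¹) * m⁻¹) * (m * m⁻¹)
        = m * (p * F * p⁻¹) * m⁻¹ * m * m⁻¹ := by rw [← mul_assoc]
      _ = m * (p * F * p⁻¹) * m⁻¹ := triple_mid' (m * (p*F*p⁻¹)) m
  have hBA : (m * (p * F * p⁻¹) * m⁻¹) * (n * F * n⁻¹ * (m * m⁻¹)) =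
      m * (p * F * p⁻¹) * m⁻¹ := by
    calc (m * (p * F * p⁻¹) * m⁻¹) * (n * F * n⁻¹ * (m * m⁻¹))
        = ((m * (p * F * p⁻¹) * m⁻¹) * (n * F * n⁻¹)) * (m * m⁻¹) := by
          rw [← mul_assoc]
      _ = ((n * F * e0 * n⁻¹) * (n * F * n⁻¹)) * (m * m⁻¹) := by rw [hB1]
      _ = (n * F * e0 * n⁻¹) * (m * m⁻¹) := by rw [hBn]
      _ = (m * (p * F * p⁻¹) * m⁻¹) * (m * m⁻¹) := by rw [← hB1]
      _ = m * (p * F * p⁻¹) * m⁻¹ := hBm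
  have hA2 : n * F * n⁻¹ * (m * m⁻¹) = m * p * F * e1 * p⁻¹ * m⁻¹ := by
    calc n * F * n⁻¹ * (m * m⁻¹)
        = (m * m⁻¹) * (n * F * n⁻¹) := InverseMonoid.idem_comm _ _ hNF hMM
      _ = (m * m⁻¹) * (n * F * n⁻¹) * (m * m⁻¹) := (sandwich_idem hMM hNF).symm
      _ = m * (m⁻¹ * n) * F * (n⁻¹ * m) * m⁻¹ := by simp only [← mul_assoc]
      _ = m * (p * e1) * F * (e1 * p⁻¹) * m⁻¹ := by rw [hd, hdinv]
      _ = m * p * e1 * F * e1 * p⁻¹ * m⁻¹ := by simp only [← mul_assoc]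
      _ = m * p * F * e1 * e1 * p⁻¹ * m⁻¹ := by rw [swap_idem (m*p) he1 hF]
      _ = m * p * F * e1 * p⁻¹ * m⁻¹ := by rw [absorb_idem (m*p*F) he1]
  have hB2 : (m * (p * F * p⁻¹) * m⁻¹) * (n * n⁻¹ * (m * m⁻¹)) =
      m * p * F * e1 * p⁻¹ * m⁻¹ := by
    calc (m * (p * F * p⁻¹) * m⁻¹) * (n * n⁻¹ * (m * m⁻¹))
        = m * p * F * p⁻¹ * (m⁻¹ * n) * (n⁻¹ * m) * m⁻¹ := by simp only [← mul_assoc]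
      _ = m * p * F * p⁻¹ * (p * e1) * (e1 * p⁻¹) * m⁻¹ := by rw [hd, hdinv]
      _ = m * p * F * (p⁻¹ * p) * e1 * e1 * p⁻¹ * m⁻¹ := by simp only [← mul_assoc]
      _ = m * p * F * (p⁻¹ * p) * e1 * p⁻¹ * m⁻¹ := by
          rw [absorb_idem (m*p*F*(p⁻¹*p)) he1]
      _ = m * p * (p⁻¹ * p) * F * e1 * p⁻¹ * m⁻¹ := by
          rw [← swap_idem (m*p) (inv_mul_idem p) hF]
      _ = m * p * F * e1 * p⁻¹ * m⁻¹ := by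
          rw [← mul_assoc (m*p) p⁻¹ p, triple_mid m p]
  have hle1 : nle (n * F * n⁻¹ * (m * m⁻¹)) (m * (p * F * p⁻¹) * m⁻¹) :=
    ⟨n * n⁻¹ * (m * m⁻¹), idem_mul_idem hNN hMM, by rw [hB2]; exact hA2⟩
  have hA : (n * F * n⁻¹ * (m * m⁻¹)) * (n * F * n⁻¹ * (m * m⁻¹)) = n * F * n⁻¹ * (m * m⁻¹) :=
    idem_mul_idem hNF hMM
  have hAB : (n * F * n⁻¹ * (m * m⁻¹)) * (m * (p * F * p⁻¹) * m⁻¹) =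
      m * (p * F * p⁻¹) * m⁻¹ := by
    rw [InverseMonoid.idem_comm _ _ hA hB]; exact hBA
  have hle2 : nle (m * (p * F * p⁻¹) * m⁻¹) (n * F * n⁻¹ * (m * m⁻¹)) :=
    ⟨m * (p * F * p⁻¹) * m⁻¹, hB, hAB.symm⟩
  exact nle_antisymm hle1 hle2

lemma lemAB (m n p F : S) (hF : F * F = F) (h1 : nle (m * p) n) (h2 : nle (m⁻¹ * n) p) :
    n * F * n⁻¹ * m = m * (p * F * p⁻¹) := by
  have hK := lemK m n p F hF h1 h2
  have hPF : (p * F * p⁻¹) * (p * F * p⁻¹) = p * F * p⁻¹ := conj_idem p hF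
  calc n * F * n⁻¹ * m
      = n * F * n⁻¹ * (m * m⁻¹) * m := by rw [← mul_assoc, triple_mid (n*F*n⁻¹) m]
    _ = m * (p * F * p⁻¹) * m⁻¹ * m := by rw [hK]
    _ = m * ((p * F * p⁻¹) * (m⁻¹ * m)) := by simp only [← mul_assoc]
    _ = m * ((m⁻¹ * m) * (p * F * p⁻¹)) := by
        rw [InverseMonoid.idem_comm (p*F*p⁻¹) (m⁻¹*m) hPF (inv_mul_idem m)]
    _ = m * (m⁻¹ * m) * (p * F * p⁻¹) := by rw [← mul_assoc m (m⁻¹*m) (p*F*p⁻¹)]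
    _ = m * m⁻¹ * m * (p * F * p⁻¹) := by rw [← mul_assoc m m⁻¹ m]
    _ = m * (p * F * p⁻¹) := by rw [InverseMonoid.mul_inv_self_mul]

end AuxK

section AuxMx

variable {T : Type u} [FInverseMonoid T]

lemma mx_sigma (a : T) : sigma (mx a) a := (FInverseMonoid.mx_isMaxOp a).1

lemma nle_mx {a b : T} (h : sigma b a) : nle b (mx a) := (FInverseMonoid.mx_isMaxOp a).2 b h

lemma mx_congr {a b : T} (h : sigma a b) : mx a = mx b :=
  nle_antisymm (nle_mx (sigma_trans (mx_sigma a) h))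
    (nle_mx (sigma_trans (mx_sigma b) (sigma_symm h)))

lemma mx_mx (a : T) : mx (mx a) = mx a := mx_congr (mx_sigma a)

lemma mx_inv (a : T) : (mx a)⁻¹ = mx a⁻¹ := by
  have h1 : nle ((mx a)⁻¹) (mx a⁻¹) := nle_mx (sigma_inv (mx_sigma a))
  have h2 : nle (mx a⁻¹) ((mx a)⁻¹) := by
    have h3 : sigma ((mx a⁻¹)⁻¹) a := by
      have := sigma_inv (mx_sigma (a⁻¹))
      rwa [InverseMonoid.inv_inv] at this
    have h4 := nle_inv (nle_mx h3)
    rwa [InverseMonoid.inv_inv] at h4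
  exact nle_antisymm h2 h1 |>.symm

lemma mx_one : mx (1 : T) = 1 := by
  have h1 : nle (1 : T) (mx 1) := nle_mx (sigma_refl 1)
  obtain ⟨e, he, h1e⟩ := h1
  have h2 : nle (mx (1:T)) (mx 1 * mx 1) := ⟨e, he, by rw [mul_assoc, ← h1e, mul_one]⟩
  have h3 : sigma (mx (1:T) * mx 1) 1 :=
    sigma_trans (sigma_mul_right (mx 1) (mx_sigma 1)) (by rw [one_mul]; exact mx_sigma 1)
  have h5 : mx (1:T) = mx 1 * mx 1 := nle_antisymm h2 (nle_mx h3)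
  have h6 : nle (mx (1:T)) 1 := ⟨mx 1, h5.symm, (one_mul _).symm⟩
  exact nle_antisymm h6 ⟨e, he, h1e⟩

lemma mx_mul_idem {e : T} (he : e * e = e) (a : T) : mx (mx a * e) = mx a := by
  have hs : sigma (mx a * e) (mx a) := ⟨e, he, by rw [mul_assoc, he]⟩
  rw [mx_congr hs, mx_mx]

lemma mx_idem_mul {e : T} (he : e * e = e) (a : T) : mx (e * mx a) = mx a := by
  rw [conj_left (mx a) he]
  have hce : ((mx a)⁻¹ * e * mx a) * ((mx a)⁻¹ * e * mx a) = (mx a)⁻¹ * e * mx a := by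
    have := conj_idem ((mx a)⁻¹) he
    rwa [InverseMonoid.inv_inv] at this
  exact mx_mul_idem hce a

lemma mx_absorb (a : T) : mx a * (mx a)⁻¹ * (a * a⁻¹) * mx a = a := by
  have h : a = a * a⁻¹ * mx a := eq_mul_inv_mul_of_nle (nle_mx (sigma_refl a))
  calc mx a * (mx a)⁻¹ * (a * a⁻¹) * mx a
      = (mx a * (mx a)⁻¹) * ((a * a⁻¹) * mx a) := mul_assoc _ _ _
    _ = (mx a * (mx a)⁻¹) * a := by rw [← h]
    _ = mx a * (mx a)⁻¹ * (a * a⁻¹ * mx a) := by rw [← h]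
    _ = mx a * (mx a)⁻¹ * (a * a⁻¹) * mx a := by rw [← mul_assoc]
    _ = a * a⁻¹ * (mx a * (mx a)⁻¹) * mx a := by
        rw [InverseMonoid.idem_comm (mx a * (mx a)⁻¹) (a * a⁻¹) (mul_inv_idem (mx a))
          (mul_inv_idem a)]
    _ = a * a⁻¹ * (mx a * (mx a)⁻¹ * mx a) := by simp only [← mul_assoc]
    _ = a * a⁻¹ * mx a := by rw [InverseMonoid.mul_inv_self_mul]
    _ = a := h.symm

end AuxMx
section AuxGQ

variable {T : Type w} [FInverseMonoid T]

/-- The maximum element of a σ-class. -/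
def classMax : GQuot T → T := Quotient.lift mx (fun _ _ h => mx_congr h)

lemma classMax_mk (a : T) : classMax (σclass a) = mx a := rfl

lemma σclass_mul (a b : T) : σclass (a * b) = σclass a * σclass b := rfl

lemma σclass_classMax (c : GQuot T) : σclass (classMax c) = c := by
  induction c using Quotient.ind with
  | _ a => exact Quotient.sound (mx_sigma a)

lemma nle_classMax {s : T} {c : GQuot T} (h : σclass s = c) : nle s (classMax c) := by
  induction c using Quotient.ind with
  | _ a => exact nle_mx (Quotient.exact h)

lemma classMax_inv (c : GQuot T) : (classMax c)⁻¹ = classMax c⁻¹ := by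
  induction c using Quotient.ind with
  | _ a => exact mx_inv a

lemma classMax_one : classMax (1 : GQuot T) = 1 := mx_one

lemma mx_classMax (c : GQuot T) : mx (classMax c) = classMax c := by
  induction c using Quotient.ind with
  | _ a => exact mx_mx a

variable {X : Type v}

/-- The canonical homomorphism `FG_X → T/σ`. -/
def psiH (f : X → T) : FreeGroup X →* GQuot T := FreeGroup.lift (fun x => σclass (f x))

/-- The maximum element of the σ-class determined by `g ∈ FG_X`. -/
def Mg (f : X → T) (g : FreeGroup X) : T := classMax (psiH f g)

/-- The "vertex" idempotent. -/
def nuT (f : X → T) (g : FreeGroup X) : T := Mg f g * (Mg f g)⁻¹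

/-- The "edge" idempotent. -/
def ioT (f : X → T) (e : FreeGroup X × X) : T :=
  Mg f e.1 * (f e.2 * (f e.2)⁻¹) * (Mg f e.1)⁻¹

variable (f : X → T)

lemma Mg_one : Mg f 1 = 1 := by rw [Mg, map_one, classMax_one]

lemma Mg_inv (g : FreeGroup X) : (Mg f g)⁻¹ = Mg f g⁻¹ := by
  rw [Mg, Mg, map_inv, classMax_inv]

lemma σclass_Mg (g : FreeGroup X) : σclass (Mg f g) = psiH f g := σclass_classMax _

lemma Mg_mul_le (g g' : FreeGroup X) : nle (Mg f g * Mg f g') (Mg f (g * g')) := by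
  apply nle_classMax
  rw [map_mul, ← σclass_Mg f g, ← σclass_Mg f g', σclass_mul]

lemma Mg_of (x : X) : Mg f (FreeGroup.of x) = mx (f x) := by
  rw [Mg, show psiH f (FreeGroup.of x) = σclass (f x) from FreeGroup.lift_apply_of, classMax_mk]

lemma master (F : T) (hF : F * F = F) (g w : FreeGroup X) :
    Mg f w * F * (Mg f w)⁻¹ * Mg f g =
      Mg f g * (Mg f (g⁻¹ * w) * F * (Mg f (g⁻¹ * w))⁻¹) := by
  apply lemAB _ _ _ _ hF
  · have h := Mg_mul_le f g (g⁻¹ * w)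
    rwa [mul_inv_cancel_left] at h
  · rw [Mg_inv]
    exact Mg_mul_le f g⁻¹ w

lemma nu_shift (g v : FreeGroup X) :
    Mg f g * nuT f v = nuT f (g * v) * Mg f g := by
  have h := master f 1 (one_mul 1) g (g * v)
  rw [inv_mul_cancel_left] at h
  simp only [mul_one] at h
  simp only [nuT]
  exact h.symm

lemma io_shift (g p : FreeGroup X) (x : X) :
    Mg f g * ioT f (p, x) = ioT f (g * p, x) * Mg f g := by
  have h := master f (f x * (f x)⁻¹) (mul_inv_idem (f x)) g (g * p)
  rw [inv_mul_cancel_left] at h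
  simp only [ioT]
  exact h.symm

lemma Mg_mul (g g' : FreeGroup X) :
    Mg f g * Mg f g' = nuT f (g * g') * nuT f g * Mg f (g * g') := by
  have h1 : nle (Mg f g * Mg f g') (Mg f (g * g')) := Mg_mul_le f g g'
  have h2 : nle ((Mg f g)⁻¹ * Mg f (g * g')) (Mg f g') := by
    rw [Mg_inv]
    have h := Mg_mul_le f g⁻¹ (g * g')
    rwa [inv_mul_cancel_left] at h
  have hK := lemK (Mg f g) (Mg f (g * g')) (Mg f g') 1 (one_mul 1) h1 h2
  simp only [mul_one] at hK
  have hC6 : Mg f g * Mg f g' =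
      (Mg f g * Mg f g') * (Mg f g * Mg f g')⁻¹ * Mg f (g * g') :=
    eq_mul_inv_mul_of_nle h1
  have hqq : (Mg f g * Mg f g') * (Mg f g * Mg f g')⁻¹ =
      Mg f g * (Mg f g' * (Mg f g')⁻¹) * (Mg f g)⁻¹ := by
    rw [InverseMonoid.mul_inv_rev]
    simp only [← mul_assoc]
  conv_lhs => rw [hC6, hqq, ← hK]
  simp only [nuT]

end AuxGQ

section AuxIdem

variable {T : Type w} [InverseMonoid T]

/-- The semilattice of idempotents of an inverse monoid. -/
def IdemT (T : Type w) [InverseMonoid T] : Type w := {e : T // e * e = e}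

instance : CommMonoid (IdemT T) where
  mul a b := ⟨a.1 * b.1, idem_mul_idem a.2 b.2⟩
  one := ⟨1, one_mul 1⟩
  mul_assoc a b c := Subtype.ext (mul_assoc a.1 b.1 c.1)
  one_mul a := Subtype.ext (one_mul a.1)
  mul_one a := Subtype.ext (mul_one a.1)
  mul_comm a b := Subtype.ext (InverseMonoid.idem_comm a.1 b.1 a.2 b.2)

@[simp] lemma IdemT.coe_mul (a b : IdemT T) : (a * b).val = a.val * b.val := rfl
@[simp] lemma IdemT.coe_one : (1 : IdemT T).val = 1 := rfl
lemma IdemT.idem (a : IdemT T) : a.val * a.val = a.val := a.2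
lemma IdemT.sq (a : IdemT T) : a * a = a := Subtype.ext a.2

lemma prod_idem_mem {α : Type*} [DecidableEq α] (s : Finset α) (F : α → IdemT T) {a : α}
    (ha : a ∈ s) : (∏ i ∈ s, F i) * F a = ∏ i ∈ s, F i := by
  conv_lhs => rw [← Finset.mul_prod_erase s F ha]
  rw [mul_right_comm, IdemT.sq, Finset.mul_prod_erase s F ha]

lemma prod_idem_subset {α : Type*} [DecidableEq α] {s t : Finset α} (h : s ⊆ t)
    (F : α → IdemT T) : (∏ i ∈ t, F i) * (∏ i ∈ s, F i) = ∏ i ∈ t, F i := by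
  induction s using Finset.induction_on with
  | empty => rw [Finset.prod_empty, mul_one]
  | @insert a s' ha ih =>
    rw [Finset.prod_insert ha, ← mul_assoc,
      prod_idem_mem t F (h (Finset.mem_insert_self a s')),
      ih (fun i hi => h (Finset.mem_insert_of_mem hi))]

lemma prod_idem_union {α : Type*} [DecidableEq α] (s t : Finset α) (F : α → IdemT T) :
    ∏ i ∈ s ∪ t, F i = (∏ i ∈ s, F i) * (∏ i ∈ t, F i) := by
  rw [← Finset.prod_union_inter, prod_idem_subset
    ((Finset.inter_subset_left).trans Finset.subset_union_left) F]

lemma prod_idem_insert {α : Type*} [DecidableEq α] (a : α) (s : Finset α) (F : α → IdemT T) :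
    ∏ i ∈ insert a s, F i = F a * ∏ i ∈ s, F i := by
  by_cases ha : a ∈ s
  · rw [Finset.insert_eq_self.mpr ha]
    rw [mul_comm]
    exact (prod_idem_mem s F ha).symm
  · exact Finset.prod_insert ha

end AuxIdem
section AuxH

variable {X : Type v} {T : Type w} [FInverseMonoid T]

/-- Vertex idempotent, as an element of the idempotent semilattice. -/
def vIdem (f : X → T) (v : FreeGroup X) : IdemT T := ⟨nuT f v, mul_inv_idem _⟩

/-- Edge idempotent, as an element of the idempotent semilattice. -/
def eIdem (f : X → T) (e : FreeGroup X × X) : IdemT T :=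
  ⟨ioT f e, conj_idem (Mg f e.1) (mul_inv_idem (f e.2))⟩

@[simp] lemma vIdem_val (f : X → T) (v : FreeGroup X) : (vIdem f v).val = nuT f v := rfl
@[simp] lemma eIdem_val (f : X → T) (e : FreeGroup X × X) : (eIdem f e).val = ioT f e := rfl

lemma prod_shift (f : X → T) (g : FreeGroup X) {α : Type*} (s : Finset α)
    (F F' : α → IdemT T)
    (hcomm : ∀ i ∈ s, Mg f g * (F i).val = (F' i).val * Mg f g) :
    Mg f g * (∏ i ∈ s, F i).val = (∏ i ∈ s, F' i).val * Mg f g := by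
  classical
  induction s using Finset.induction_on with
  | empty => simp only [Finset.prod_empty, IdemT.coe_one, mul_one, one_mul]
  | @insert a s' ha ih =>
    rw [Finset.prod_insert ha, Finset.prod_insert ha, IdemT.coe_mul, IdemT.coe_mul,
      ← mul_assoc, hcomm a (Finset.mem_insert_self a s'), mul_assoc,
      ih (fun i hi => hcomm i (Finset.mem_insert_of_mem hi)), ← mul_assoc]

/-- The idempotent part of the value of `(Γ,g)`. -/
noncomputable def pIdem (f : X → T) (a : FExp (FreeGroup.of : X → FreeGroup X)) : IdemT T :=
  (∏ v ∈ a.finite.1.toFinset, vIdem f v) * (∏ e ∈ a.finite.2.toFinset, eIdem f e)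

/-- The universal morphism `F(FG_X) → T`. -/
noncomputable def hFun (f : X → T) (a : FExp (FreeGroup.of : X → FreeGroup X)) : T :=
  (pIdem f a).val * Mg f a.elt

variable (f : X → T)

lemma nuT_one : nuT f 1 = 1 := by
  rw [nuT, Mg_one, im_inv_one, mul_one]

lemma hFun_one : hFun f 1 = 1 := by
  classical
  have ht1 : (1 : FExp (FreeGroup.of : X → FreeGroup X)).finite.1.toFinset
      = {(1 : FreeGroup X)} := by
    ext x
    simp [Set.Finite.mem_toFinset, deltaG]
  have ht2 : (1 : FExp (FreeGroup.of : X → FreeGroup X)).finite.2.toFinset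
      = (∅ : Finset (FreeGroup X × X)) := by
    ext x
    simp [Set.Finite.mem_toFinset, deltaG]
  rw [hFun, pIdem, ht1, ht2, Finset.prod_singleton, Finset.prod_empty, mul_one]
  show nuT f 1 * Mg f (1 : FExp (FreeGroup.of : X → FreeGroup X)).elt = 1
  rw [nuT_one, one_mul]
  exact Mg_one f

lemma hFun_mxOp (a : FExp (FreeGroup.of : X → FreeGroup X)) :
    hFun f (mxOp a) = Mg f a.elt := by
  classical
  have ht1 : (mxOp a).finite.1.toFinset = insert (1 : FreeGroup X) {a.elt} := by
    ext x
    simp [Set.Finite.mem_toFinset, mxOp, maxElt, deltaG]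
  have ht2 : (mxOp a).finite.2.toFinset = (∅ : Finset (FreeGroup X × X)) := by
    ext x
    simp [Set.Finite.mem_toFinset, mxOp, maxElt, deltaG]
  rw [hFun, pIdem, ht1, ht2, prod_idem_insert, Finset.prod_singleton, Finset.prod_empty,
    mul_one]
  show (vIdem f 1 * vIdem f a.elt).val * Mg f a.elt = Mg f a.elt
  rw [IdemT.coe_mul, vIdem_val, vIdem_val, nuT_one, one_mul, nuT,
    InverseMonoid.mul_inv_self_mul]

lemma mx_idem_mul_classMax {e : T} (he : e * e = e) (c : GQuot T) :
    mx (e * classMax c) = classMax c := by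
  induction c using Quotient.ind with
  | _ r => exact mx_idem_mul he r

lemma mx_hFun (a : FExp (FreeGroup.of : X → FreeGroup X)) :
    mx (hFun f a) = Mg f a.elt :=
  mx_idem_mul_classMax (pIdem f a).2 (psiH f a.elt)

lemma hFun_mx (a : FExp (FreeGroup.of : X → FreeGroup X)) :
    hFun f (mxOp a) = mx (hFun f a) := by
  rw [hFun_mxOp, mx_hFun]

lemma hFun_gen (x : X) : hFun f (genElt FreeGroup.of x) = f x := by
  classical
  have hx1 : FreeGroup.of x ≠ (1 : FreeGroup X) := by
    intro h
    have := congrArg FreeGroup.toWord h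
    simp [FreeGroup.toWord_one] at this
  have ht1 : (genElt FreeGroup.of x).finite.1.toFinset
      = insert (1 : FreeGroup X) {FreeGroup.of x} := by
    ext v
    simp [Set.Finite.mem_toFinset, genElt, edgeG]
  have ht2 : (genElt FreeGroup.of x).finite.2.toFinset
      = {((1 : FreeGroup X), x)} := by
    ext e
    simp [Set.Finite.mem_toFinset, genElt, edgeG]
  rw [hFun, pIdem, ht1, ht2, prod_idem_insert, Finset.prod_singleton,
    Finset.prod_singleton]
  show (vIdem f 1 * vIdem f (FreeGroup.of x) * eIdem f (1, x)).val
      * Mg f (genElt FreeGroup.of x).elt = f x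
  rw [IdemT.coe_mul, IdemT.coe_mul, vIdem_val, vIdem_val, eIdem_val, nuT_one, one_mul]
  show nuT f (FreeGroup.of x) * ioT f (1, x) * Mg f (FreeGroup.of x) = f x
  rw [nuT, ioT]
  show Mg f (FreeGroup.of x) * (Mg f (FreeGroup.of x))⁻¹ *
      (Mg f 1 * (f x * (f x)⁻¹) * (Mg f 1)⁻¹) * Mg f (FreeGroup.of x) = f x
  rw [Mg_one, im_inv_one, one_mul, mul_one, Mg_of]
  exact mx_absorb (f x)

end AuxH
section AuxH2

variable {X : Type v} {T : Type w} [FInverseMonoid T] (f : X → T)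

lemma hFun_mul (a b : FExp (FreeGroup.of : X → FreeGroup X)) :
    hFun f (a * b) = hFun f a * hFun f b := by
  classical
  have hv : (a * b).finite.1.toFinset
      = a.finite.1.toFinset ∪ b.finite.1.toFinset.image (a.elt * ·) := by
    ext x
    simp [Set.Finite.mem_toFinset]
  have he : (a * b).finite.2.toFinset
      = a.finite.2.toFinset ∪ b.finite.2.toFinset.image (fun e => (a.elt * e.1, e.2)) := by
    ext x
    simp [Set.Finite.mem_toFinset]
  have hVb : ∏ v ∈ b.finite.1.toFinset.image (a.elt * ·), vIdem f v
      = ∏ v ∈ b.finite.1.toFinset, vIdem f (a.elt * v) :=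
    Finset.prod_image (fun x _ y _ h => mul_left_cancel h)
  have hEb : ∏ e ∈ b.finite.2.toFinset.image (fun e => (a.elt * e.1, e.2)), eIdem f e
      = ∏ e ∈ b.finite.2.toFinset, eIdem f (a.elt * e.1, e.2) := by
    refine Finset.prod_image ?_
    intro x _ y _ h
    simp only [Prod.mk.injEq] at h
    exact Prod.ext (mul_left_cancel h.1) h.2
  have hmain : pIdem f (a * b)
      = ((∏ v ∈ a.finite.1.toFinset, vIdem f v) *
          ∏ v ∈ b.finite.1.toFinset, vIdem f (a.elt * v)) *
        ((∏ e ∈ a.finite.2.toFinset, eIdem f e) *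
          ∏ e ∈ b.finite.2.toFinset, eIdem f (a.elt * e.1, e.2)) := by
    rw [pIdem, hv, he, prod_idem_union, prod_idem_union, hVb, hEb]
  have habs1 : (∏ v ∈ a.finite.1.toFinset, vIdem f v) * vIdem f a.elt
      = ∏ v ∈ a.finite.1.toFinset, vIdem f v :=
    prod_idem_mem _ _ ((Set.Finite.mem_toFinset _).mpr a.elt_mem)
  have habs2 : (∏ v ∈ b.finite.1.toFinset, vIdem f (a.elt * v)) * vIdem f (a.elt * b.elt)
      = ∏ v ∈ b.finite.1.toFinset, vIdem f (a.elt * v) :=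
    prod_idem_mem _ (fun v => vIdem f (a.elt * v)) ((Set.Finite.mem_toFinset _).mpr b.elt_mem)
  have hgen : ∀ (A B C D u w : IdemT T), A * u = A → C * w = C →
      (A * B) * (C * D) * (w * u) = (A * C) * (B * D) := by
    intro A B C D u w h1 h2
    calc (A * B) * (C * D) * (w * u) = (A * u) * ((C * w) * (B * D)) := by ac_rfl
      _ = A * (C * (B * D)) := by rw [h1, h2]
      _ = (A * C) * (B * D) := by rw [mul_assoc]
  have hshuffle :
      ((∏ v ∈ a.finite.1.toFinset, vIdem f v) * (∏ e ∈ a.finite.2.toFinset, eIdem f e)) *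
        ((∏ v ∈ b.finite.1.toFinset, vIdem f (a.elt * v)) *
          (∏ e ∈ b.finite.2.toFinset, eIdem f (a.elt * e.1, e.2))) *
        (vIdem f (a.elt * b.elt) * vIdem f a.elt)
      = pIdem f (a * b) := by
    rw [hmain]
    exact hgen _ _ _ _ _ _ habs1 habs2
  have hS : Mg f a.elt * ((∏ v ∈ b.finite.1.toFinset, vIdem f v).val *
        (∏ e ∈ b.finite.2.toFinset, eIdem f e).val)
      = ((∏ v ∈ b.finite.1.toFinset, vIdem f (a.elt * v)).val *
        (∏ e ∈ b.finite.2.toFinset, eIdem f (a.elt * e.1, e.2)).val) * Mg f a.elt := by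
    rw [← mul_assoc,
      prod_shift f a.elt b.finite.1.toFinset (vIdem f) (fun v => vIdem f (a.elt * v))
        (fun v _ => nu_shift f a.elt v),
      mul_assoc,
      prod_shift f a.elt b.finite.2.toFinset (eIdem f) (fun e => eIdem f (a.elt * e.1, e.2))
        (fun e _ => io_shift f a.elt e.1 e.2),
      ← mul_assoc]
  have hL : hFun f (a * b) =
      (((∏ v ∈ a.finite.1.toFinset, vIdem f v) * (∏ e ∈ a.finite.2.toFinset, eIdem f e)) *
        ((∏ v ∈ b.finite.1.toFinset, vIdem f (a.elt * v)) *
          (∏ e ∈ b.finite.2.toFinset, eIdem f (a.elt * e.1, e.2))) *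
        (vIdem f (a.elt * b.elt) * vIdem f a.elt)).val * Mg f (a.elt * b.elt) := by
    rw [hFun]
    simp only [FExp.mul_elt]
    rw [← hshuffle]
  have hR : hFun f a * hFun f b =
      (((∏ v ∈ a.finite.1.toFinset, vIdem f v) * (∏ e ∈ a.finite.2.toFinset, eIdem f e)) *
        ((∏ v ∈ b.finite.1.toFinset, vIdem f (a.elt * v)) *
          (∏ e ∈ b.finite.2.toFinset, eIdem f (a.elt * e.1, e.2))) *
        (vIdem f (a.elt * b.elt) * vIdem f a.elt)).val * Mg f (a.elt * b.elt) := by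
    rw [hFun, hFun]
    calc (pIdem f a).val * Mg f a.elt * ((pIdem f b).val * Mg f b.elt)
        = (pIdem f a).val * (Mg f a.elt * (pIdem f b).val) * Mg f b.elt := by
          simp only [← mul_assoc]
      _ = (pIdem f a).val *
            (((∏ v ∈ b.finite.1.toFinset, vIdem f (a.elt * v)).val *
              (∏ e ∈ b.finite.2.toFinset, eIdem f (a.elt * e.1, e.2)).val) * Mg f a.elt) *
            Mg f b.elt := by
          rw [show (pIdem f b).val = (∏ v ∈ b.finite.1.toFinset, vIdem f v).val *
              (∏ e ∈ b.finite.2.toFinset, eIdem f e).val from by rw [pIdem, IdemT.coe_mul],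
            hS]
      _ = ((pIdem f a) * ((∏ v ∈ b.finite.1.toFinset, vIdem f (a.elt * v)) *
            (∏ e ∈ b.finite.2.toFinset, eIdem f (a.elt * e.1, e.2)))).val *
            (Mg f a.elt * Mg f b.elt) := by
          simp only [IdemT.coe_mul]
          simp only [← mul_assoc]
      _ = ((pIdem f a) * ((∏ v ∈ b.finite.1.toFinset, vIdem f (a.elt * v)) *
            (∏ e ∈ b.finite.2.toFinset, eIdem f (a.elt * e.1, e.2)))).val *
            (nuT f (a.elt * b.elt) * nuT f a.elt * Mg f (a.elt * b.elt)) := by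
          rw [Mg_mul]
      _ = ((pIdem f a) * ((∏ v ∈ b.finite.1.toFinset, vIdem f (a.elt * v)) *
            (∏ e ∈ b.finite.2.toFinset, eIdem f (a.elt * e.1, e.2))) *
            (vIdem f (a.elt * b.elt) * vIdem f a.elt)).val * Mg f (a.elt * b.elt) := by
          simp only [IdemT.coe_mul, vIdem_val]
          simp only [← mul_assoc]
      _ = _ := by rw [pIdem]
  rw [hL, hR]

lemma hFun_inv (a : FExp (FreeGroup.of : X → FreeGroup X)) :
    hFun f a⁻¹ = (hFun f a)⁻¹ := by
  classical
  have hv : (a⁻¹).finite.1.toFinset = a.finite.1.toFinset.image (a.elt⁻¹ * ·) := by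
    ext x
    simp [Set.Finite.mem_toFinset]
  have he : (a⁻¹).finite.2.toFinset
      = a.finite.2.toFinset.image (fun e => (a.elt⁻¹ * e.1, e.2)) := by
    ext x
    simp [Set.Finite.mem_toFinset]
  have hVb : ∏ v ∈ a.finite.1.toFinset.image (a.elt⁻¹ * ·), vIdem f v
      = ∏ v ∈ a.finite.1.toFinset, vIdem f (a.elt⁻¹ * v) :=
    Finset.prod_image (fun x _ y _ h => mul_left_cancel h)
  have hEb : ∏ e ∈ a.finite.2.toFinset.image (fun e => (a.elt⁻¹ * e.1, e.2)), eIdem f e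
      = ∏ e ∈ a.finite.2.toFinset, eIdem f (a.elt⁻¹ * e.1, e.2) := by
    refine Finset.prod_image ?_
    intro x _ y _ h
    simp only [Prod.mk.injEq] at h
    exact Prod.ext (mul_left_cancel h.1) h.2
  have hS : Mg f a.elt⁻¹ * ((∏ v ∈ a.finite.1.toFinset, vIdem f v).val *
        (∏ e ∈ a.finite.2.toFinset, eIdem f e).val)
      = ((∏ v ∈ a.finite.1.toFinset, vIdem f (a.elt⁻¹ * v)).val *
        (∏ e ∈ a.finite.2.toFinset, eIdem f (a.elt⁻¹ * e.1, e.2)).val) * Mg f a.elt⁻¹ := by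
    rw [← mul_assoc,
      prod_shift f a.elt⁻¹ a.finite.1.toFinset (vIdem f) (fun v => vIdem f (a.elt⁻¹ * v))
        (fun v _ => nu_shift f a.elt⁻¹ v),
      mul_assoc,
      prod_shift f a.elt⁻¹ a.finite.2.toFinset (eIdem f) (fun e => eIdem f (a.elt⁻¹ * e.1, e.2))
        (fun e _ => io_shift f a.elt⁻¹ e.1 e.2),
      ← mul_assoc]
  calc hFun f a⁻¹
      = ((∏ v ∈ a.finite.1.toFinset, vIdem f (a.elt⁻¹ * v)) *
          (∏ e ∈ a.finite.2.toFinset, eIdem f (a.elt⁻¹ * e.1, e.2))).val * Mg f a.elt⁻¹ := by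
        rw [hFun, pIdem]
        simp only [FExp.inv_elt]
        rw [hv, he, hVb, hEb]
    _ = Mg f a.elt⁻¹ * ((∏ v ∈ a.finite.1.toFinset, vIdem f v).val *
          (∏ e ∈ a.finite.2.toFinset, eIdem f e).val) := by
        rw [hS, IdemT.coe_mul]
    _ = (hFun f a)⁻¹ := by
        rw [hFun, InverseMonoid.mul_inv_rev, idem_inv (pIdem f a).2, Mg_inv, pIdem,
          IdemT.coe_mul]

end AuxH2
section AuxGen

variable {X : Type v}

/-- The subalgebra of `F(FG_X)` generated by the elements `(Γ_x, x)`. -/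
inductive Cl : FExp (FreeGroup.of : X → FreeGroup X) → Prop
  | one : Cl 1
  | gen (x : X) : Cl (genElt FreeGroup.of x)
  | mul {a b} : Cl a → Cl b → Cl (a * b)
  | inv {a} : Cl a → Cl a⁻¹
  | mxo {a} : Cl a → Cl (mxOp a)

lemma maxElt_one : maxElt (FreeGroup.of : X → FreeGroup X) 1 = 1 :=
  FExp.ext' rfl rfl

lemma cl_maxElt (g : FreeGroup X) : Cl (maxElt FreeGroup.of g) := by
  refine FreeGroup.induction_on g ?_ ?_ ?_ ?_
  · rw [maxElt_one]; exact Cl.one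
  · intro x
    show Cl (maxElt FreeGroup.of (FreeGroup.of x))
    have h2 : maxElt FreeGroup.of (FreeGroup.of x) = mxOp (genElt FreeGroup.of x) := rfl
    rw [h2]; exact Cl.mxo (Cl.gen x)
  · intro x hx
    show Cl (maxElt FreeGroup.of (FreeGroup.of x)⁻¹)
    have h2 : maxElt FreeGroup.of (FreeGroup.of x)⁻¹
        = mxOp ((maxElt FreeGroup.of (FreeGroup.of x))⁻¹) := rfl
    rw [h2]; exact Cl.mxo (Cl.inv hx)
  · intro g1 g2 h1 h2
    have h3 : maxElt FreeGroup.of (g1 * g2)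
        = mxOp (maxElt FreeGroup.of g1 * maxElt FreeGroup.of g2) := rfl
    rw [h3]; exact Cl.mxo (Cl.mul h1 h2)

lemma cl_edgeless (a : FExp (FreeGroup.of : X → FreeGroup X)) (h : a.graph.edges = ∅) :
    Cl a := by
  classical
  suffices H : ∀ (S : Set (FreeGroup X)), S.Finite →
      ∀ a : FExp (FreeGroup.of : X → FreeGroup X),
        a.graph.edges = ∅ → a.graph.verts = S ∪ {1, a.elt} → Cl a by
    refine H a.graph.verts a.finite.1 a h ?_
    ext x
    simp only [Set.mem_union, Set.mem_insert_iff, Set.mem_singleton_iff]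
    constructor
    · exact fun hx => Or.inl hx
    · rintro (hx | rfl | rfl)
      · exact hx
      · exact a.one_mem
      · exact a.elt_mem
  intro S hS
  refine Set.Finite.induction_on
    (motive := fun S _ => ∀ a : FExp (FreeGroup.of : X → FreeGroup X),
      a.graph.edges = ∅ → a.graph.verts = S ∪ {1, a.elt} → Cl a) S hS ?_ ?_
  · intro a hE hV
    have claim : a = maxElt FreeGroup.of a.elt := by
      refine FExp.ext' (Subgraph.ext' ?_ ?_) rfl
      · rw [hV, Set.empty_union]; rfl
      · rw [hE]; rfl
    rw [claim]
    exact cl_maxElt a.elt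
  · intro v S' hvS' hS' IH a hE hV
    have hb : Cl (⟨⟨S' ∪ {1, a.elt}, ∅, by simp, by simp⟩, a.elt,
        ⟨hS'.union ((Set.finite_singleton _).insert 1), Set.finite_empty⟩,
        Set.mem_union_right _ (Set.mem_insert _ _),
        Set.mem_union_right _ (Set.mem_insert_of_mem _ rfl)⟩ :
        FExp (FreeGroup.of : X → FreeGroup X)) := IH _ rfl rfl
    have key : a = (maxElt FreeGroup.of v * (maxElt FreeGroup.of v)⁻¹) *
        (⟨⟨S' ∪ {1, a.elt}, ∅, by simp, by simp⟩, a.elt,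
        ⟨hS'.union ((Set.finite_singleton _).insert 1), Set.finite_empty⟩,
        Set.mem_union_right _ (Set.mem_insert _ _),
        Set.mem_union_right _ (Set.mem_insert_of_mem _ rfl)⟩ :
        FExp (FreeGroup.of : X → FreeGroup X)) := by
      refine FExp.ext' (Subgraph.ext' ?_ ?_) ?_
      · rw [hV]
        ext x
        simp [maxElt, deltaG]
        tauto
      · rw [hE]
        ext x
        simp [maxElt, deltaG]
      · simp [maxElt]
    rw [key]
    exact Cl.mul (Cl.mul (cl_maxElt v) (Cl.inv (cl_maxElt v))) hb

lemma cl_all (a : FExp (FreeGroup.of : X → FreeGroup X)) : Cl a := by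
  classical
  suffices H : ∀ (E : Set (FreeGroup X × X)), E.Finite →
      ∀ a : FExp (FreeGroup.of : X → FreeGroup X), a.graph.edges = E → Cl a from
    H a.graph.edges a.finite.2 a rfl
  intro E hE
  refine Set.Finite.induction_on
    (motive := fun E _ => ∀ a : FExp (FreeGroup.of : X → FreeGroup X),
      a.graph.edges = E → Cl a) E hE ?_ ?_
  · intro a ha
    exact cl_edgeless a ha
  · intro e E' heE' hE' IH a hE2
    have hsub : E' ⊆ a.graph.edges := by rw [hE2]; exact Set.subset_insert e E'
    have hmem : e ∈ a.graph.edges := by rw [hE2]; exact Set.mem_insert e E'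
    have h1 : e.1 ∈ a.graph.verts := a.graph.src_mem e hmem
    have h2 : e.1 * FreeGroup.of e.2 ∈ a.graph.verts := a.graph.tgt_mem e hmem
    have hbCl : Cl (⟨⟨a.graph.verts, E',
        fun e' he' => a.graph.src_mem e' (hsub he'),
        fun e' he' => a.graph.tgt_mem e' (hsub he')⟩, a.elt,
        ⟨a.finite.1, a.finite.2.subset hsub⟩, a.one_mem, a.elt_mem⟩ :
        FExp (FreeGroup.of : X → FreeGroup X)) := IH _ rfl
    have key : a = (maxElt FreeGroup.of e.1 *
        (genElt FreeGroup.of e.2 * (genElt FreeGroup.of e.2)⁻¹) *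
        (maxElt FreeGroup.of e.1)⁻¹) *
        (⟨⟨a.graph.verts, E',
        fun e' he' => a.graph.src_mem e' (hsub he'),
        fun e' he' => a.graph.tgt_mem e' (hsub he')⟩, a.elt,
        ⟨a.finite.1, a.finite.2.subset hsub⟩, a.one_mem, a.elt_mem⟩ :
        FExp (FreeGroup.of : X → FreeGroup X)) := by
      refine FExp.ext' (Subgraph.ext' ?_ ?_) ?_
      · ext x
        simp [maxElt, deltaG, genElt, edgeG]
        rintro (((rfl | rfl) | (h | h)) | (rfl | rfl))
        · exact a.one_mem
        · exact h1
        · obtain rfl := inv_mul_eq_one.mp h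
          exact h1
        · have hx : x = e.1 * FreeGroup.of e.2 := by rw [← h, mul_inv_cancel_left]
          rw [hx]; exact h2
        · exact a.one_mem
        · exact h1
      · conv_lhs => rw [hE2]
        ext x
        simp [maxElt, deltaG, genElt, edgeG]
      · simp [maxElt, genElt]
    rw [key]
    exact Cl.mul (Cl.mul (Cl.mul (cl_maxElt e.1)
      (Cl.mul (Cl.gen e.2) (Cl.inv (Cl.gen e.2)))) (Cl.inv (cl_maxElt e.1))) hbCl

end AuxGen
/-- `F(FG_X)`, for the free group `FG_X` on `X` (generated via the canonical
inclusion), is a free `X`-generated F-inverse monoid: for every F-inverse monoid `T` and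
every map `f : X → T` there is a unique map `F(FG_X) → T` preserving `·`, `⁻¹`, `m`, `1`
and sending `(Γ_x, x)` to `f x` for every `x ∈ X`. -/
theorem statement14 {X : Type v} {T : Type w} [FInverseMonoid T] (f : X → T) :
    ∃ h : FExp (FreeGroup.of : X → FreeGroup X) → T,
      (h 1 = 1 ∧
       (∀ a b, h (a * b) = h a * h b) ∧
       (∀ a, h a⁻¹ = (h a)⁻¹) ∧
       (∀ a, h (mxOp a) = mx (h a)) ∧
       ∀ x : X, h (genElt FreeGroup.of x) = f x) ∧
      ∀ h' : FExp (FreeGroup.of : X → FreeGroup X) → T,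
        (h' 1 = 1 ∧
         (∀ a b, h' (a * b) = h' a * h' b) ∧
         (∀ a, h' a⁻¹ = (h' a)⁻¹) ∧
         (∀ a, h' (mxOp a) = mx (h' a)) ∧
         ∀ x : X, h' (genElt FreeGroup.of x) = f x) → h' = h := by
  refine ⟨hFun f, ⟨hFun_one f, hFun_mul f, hFun_inv f, hFun_mx f, hFun_gen f⟩, ?_⟩
  intro h' hp
  obtain ⟨h1, hm, hi, hxp, hg⟩ := hp
  funext a
  induction cl_all a with
  | one => rw [h1, hFun_one]
  | gen x => rw [hg, hFun_gen]
  | mul ha hb iha ihb => rw [hm, hFun_mul, iha, ihb]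
  | inv ha ih => rw [hi, hFun_inv, ih]
  | mxo ha ih => rw [hxp, hFun_mx, ih]

end FInvPaper
end

section
/- Let G be an X-generated group. Then P(G), the set of pairs (Γ,g) where Γ is a finite subgraph of Cay(G) without isolated vertices and g ∈ G, with multiplication (Γ,g)·(Γ',g') = (Γ ∪ g·Γ', g·g'), is an inverse monoid with identity (∅,1) and inversion (Γ,g)⁻¹ = (g⁻¹·Γ, g⁻¹); its idempotents are precisely the elements (Γ,1); its natural partial order satisfies (Γ,g) ≤ (Γ',g') iff g = g' and Γ' ⊆ Γ; the projection (Γ,g) ↦ g is a surjective idempotent pure monoid morphism onto G whose kernel congruence is the minimum group congruence σ of P(G), so G is the maximum group quotient of P(G); each (∅,g) is the maximum element of its σ-class; and P(G) is a perfect F-inverse monoid with max-operation m(Γ,g) = (∅,g). -/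
namespace FInvPaper

universe u v w

section Aux17

variable {G : Type u} [Group G] {X : Type v} {φ : X → G}

open Subgraph

lemma aux_smul_one (Γ : Subgraph φ) : (1 : G) • Γ = Γ := by
  refine Subgraph.ext' ?_ ?_
  · ext v; simp [smul_verts]
  · ext e
    constructor
    · rintro ⟨e', he', rfl⟩; simpa using he'
    · intro h; exact ⟨e, h, by simp⟩

lemma aux_smul_smul (g h : G) (Γ : Subgraph φ) : g • (h • Γ) = (g * h) • Γ := by
  refine Subgraph.ext' ?_ ?_
  · show (g * ·) '' ((h * ·) '' Γ.verts) = ((g * h) * ·) '' Γ.verts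
    rw [Set.image_image]
    exact Set.image_congr fun v _ => (mul_assoc g h v).symm
  · show (fun e : G × X => (g * e.1, e.2)) '' ((fun e : G × X => (h * e.1, e.2)) '' Γ.edges)
      = (fun e : G × X => ((g * h) * e.1, e.2)) '' Γ.edges
    rw [Set.image_image]
    exact Set.image_congr fun e _ => by rw [mul_assoc]

lemma aux_smul_union (g : G) (Γ Δ : Subgraph φ) : g • (Γ ∪ Δ) = g • Γ ∪ g • Δ :=
  Subgraph.ext' (by simp [Set.image_union]) (by simp [Set.image_union])

lemma aux_union_assoc (A B C : Subgraph φ) : A ∪ B ∪ C = A ∪ (B ∪ C) :=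
  Subgraph.ext' (Set.union_assoc _ _ _) (Set.union_assoc _ _ _)

lemma aux_union_comm (A B : Subgraph φ) : A ∪ B = B ∪ A :=
  Subgraph.ext' (Set.union_comm _ _) (Set.union_comm _ _)

lemma aux_union_self (A : Subgraph φ) : A ∪ A = A :=
  Subgraph.ext' (Set.union_self _) (Set.union_self _)

lemma aux_empty_union (A : Subgraph φ) : emptyG φ ∪ A = A :=
  Subgraph.ext' (Set.empty_union _) (Set.empty_union _)

lemma aux_union_empty (A : Subgraph φ) : A ∪ emptyG φ = A :=
  Subgraph.ext' (Set.union_empty _) (Set.union_empty _)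

lemma aux_smul_empty (g : G) : g • (emptyG φ) = emptyG φ :=
  Subgraph.ext' (by simp [emptyG]) (by simp [emptyG])

lemma aux_left_absorb (A B : Subgraph φ) : A ∪ (A ∪ B) = A ∪ B := by
  rw [← aux_union_assoc, aux_union_self]

lemma aux_right_absorb (A B : Subgraph φ) : B ∪ (A ∪ B) = A ∪ B := by
  rw [aux_union_comm A B, ← aux_union_assoc, aux_union_self]

lemma aux_finite_union {A B : Subgraph φ} (hA : A.IsFinite) (hB : B.IsFinite) :
    (A ∪ B).IsFinite := ⟨hA.1.union hB.1, hA.2.union hB.2⟩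

lemma aux_finite_smul (g : G) {A : Subgraph φ} (hA : A.IsFinite) : (g • A).IsFinite :=
  ⟨hA.1.image _, hA.2.image _⟩

lemma pexp_idem_iff (a : PExp φ) : a * a = a ↔ a.elt = 1 := by
  constructor
  · intro h
    have := congrArg PExp.elt h
    rw [PExp.mul_elt] at this
    have h2 : a.elt * a.elt = a.elt * 1 := by rw [this, mul_one]
    exact mul_left_cancel h2
  · intro h
    refine PExp.ext' ?_ ?_
    · rw [PExp.mul_graph, h, aux_smul_one, aux_union_self]
    · rw [PExp.mul_elt, h, one_mul]

lemma pexp_sigma_iff (a b : PExp φ) : sigma a b ↔ a.elt = b.elt := by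
  constructor
  · rintro ⟨e, he, hab⟩
    have he1 : e.elt = 1 := (pexp_idem_iff e).1 he
    have := congrArg PExp.elt hab
    rw [PExp.mul_elt, PExp.mul_elt, he1, mul_one, mul_one] at this
    exact this
  · intro h
    refine ⟨⟨a.elt⁻¹ • (a.graph ∪ b.graph), 1,
      aux_finite_smul _ (aux_finite_union a.finite b.finite),
      (a.noIsolated.union b.noIsolated).smul _⟩, ?_, ?_⟩
    · exact (pexp_idem_iff _).2 rfl
    · refine PExp.ext' ?_ ?_
      · show a.graph ∪ a.elt • (a.elt⁻¹ • (a.graph ∪ b.graph)) =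
          b.graph ∪ b.elt • (a.elt⁻¹ • (a.graph ∪ b.graph))
        rw [← h, aux_smul_smul, mul_inv_cancel, aux_smul_one, aux_left_absorb,
          aux_right_absorb]
      · show a.elt * 1 = b.elt * 1
        rw [h]

lemma pexp_nle_iff (a b : PExp φ) : nle a b ↔ a.elt = b.elt ∧ b.graph ⊆ a.graph := by
  constructor
  · rintro ⟨e, he, rfl⟩
    have he1 : e.elt = 1 := (pexp_idem_iff e).1 he
    refine ⟨by rw [PExp.mul_elt, he1, mul_one], ?_⟩
    exact ⟨Set.subset_union_left, Set.subset_union_left⟩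
  · rintro ⟨h1, h2⟩
    refine ⟨⟨b.elt⁻¹ • a.graph, 1, aux_finite_smul _ a.finite, a.noIsolated.smul _⟩,
      (pexp_idem_iff _).2 rfl, ?_⟩
    refine PExp.ext' ?_ ?_
    · show a.graph = b.graph ∪ b.elt • (b.elt⁻¹ • a.graph)
      rw [aux_smul_smul, mul_inv_cancel, aux_smul_one]
      exact (Subgraph.ext' (Set.union_eq_self_of_subset_left h2.1)
        (Set.union_eq_self_of_subset_left h2.2)).symm
    · show a.elt = b.elt * 1
      rw [mul_one, h1]

end Aux17

/-- For an `X`-generated group `G`, `P(G)` (pairs `(Γ,g)` with `Γ` a finite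
subgraph of `Cay(G)` without isolated vertices), with multiplication
`(Γ,g)·(Γ',g') = (Γ ∪ gΓ', gg')`, is an inverse monoid with identity `(∅,1)` and inversion
`(Γ,g)⁻¹ = (g⁻¹Γ, g⁻¹)`; its idempotents are precisely the elements `(Γ,1)`; its natural
partial order is `(Γ,g) ≤ (Γ',g')` iff `g = g'` and `Γ' ⊆ Γ`; the projection `(Γ,g) ↦ g`
is a surjective idempotent pure monoid morphism onto `G` whose kernel congruence is σ, so
`G` is the maximum group quotient of `P(G)`; each `(∅,g)` is the maximum element of its
σ-class; and `P(G)` is a perfect F-inverse monoid with max-operation `m(Γ,g) = (∅,g)`. -/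
theorem statement17 {G : Type u} [Group G] {X : Type v} (φ : X → G)
    (hφ : Subgroup.closure (Set.range φ) = ⊤) :
    -- monoid axioms, identity element (∅, 1)
    (∀ a b c : PExp φ, a * b * c = a * (b * c)) ∧
    (∀ a : PExp φ, 1 * a = a ∧ a * 1 = a) ∧
    ((1 : PExp φ).graph = emptyG φ ∧ (1 : PExp φ).elt = 1) ∧
    -- inversion (Γ,g)⁻¹ = (g⁻¹Γ, g⁻¹) makes P(G) an inverse monoid
    (∀ a : PExp φ, (a⁻¹).graph = a.elt⁻¹ • a.graph ∧ (a⁻¹).elt = a.elt⁻¹) ∧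
    (∀ a : PExp φ, a * a⁻¹ * a = a) ∧
    (∀ a : PExp φ, (a⁻¹)⁻¹ = a) ∧
    (∀ a b : PExp φ, (a * b)⁻¹ = b⁻¹ * a⁻¹) ∧
    (∀ e f : PExp φ, e * e = e → f * f = f → e * f = f * e) ∧
    -- idempotents are precisely the elements (Γ, 1)
    (∀ a : PExp φ, a * a = a ↔ a.elt = 1) ∧
    -- natural partial order
    (∀ a b : PExp φ, nle a b ↔ a.elt = b.elt ∧ b.graph ⊆ a.graph) ∧
    -- the projection (Γ,g) ↦ g is a surjective idempotent pure monoid morphism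
    (∀ a b : PExp φ, (a * b).elt = a.elt * b.elt) ∧
    ((1 : PExp φ).elt = 1) ∧
    Function.Surjective (fun a : PExp φ => a.elt) ∧
    (∀ a : PExp φ, a.elt = 1 → a * a = a) ∧
    -- its kernel congruence is σ (so G is the maximum group quotient of P(G))
    (∀ a b : PExp φ, sigma a b ↔ a.elt = b.elt) ∧
    -- each (∅, g) is the maximum element of its σ-class; P(G) is F-inverse with
    -- max-operation m(Γ,g) = (∅,g), and it is perfect
    IsMaxOp (pMax (φ := φ)) ∧
    (∀ a b : PExp φ, pMax a * pMax b = pMax (a * b)) := by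
  refine ⟨?_, ?_, ⟨rfl, rfl⟩, fun a => ⟨rfl, rfl⟩, ?_, ?_, ?_, ?_, pexp_idem_iff,
    pexp_nle_iff, fun a b => rfl, rfl, ?_, fun a h => (pexp_idem_iff a).2 h,
    pexp_sigma_iff, ?_, ?_⟩
  · -- associativity
    intro a b c
    refine PExp.ext' ?_ (mul_assoc _ _ _)
    show a.graph ∪ a.elt • b.graph ∪ (a.elt * b.elt) • c.graph =
      a.graph ∪ a.elt • (b.graph ∪ b.elt • c.graph)
    rw [aux_smul_union, aux_smul_smul, aux_union_assoc]
  · -- identity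
    intro a
    constructor
    · refine PExp.ext' ?_ (one_mul _)
      show emptyG φ ∪ (1 : G) • a.graph = a.graph
      rw [aux_smul_one, aux_empty_union]
    · refine PExp.ext' ?_ (mul_one _)
      show a.graph ∪ a.elt • emptyG φ = a.graph
      rw [aux_smul_empty, aux_union_empty]
  · -- a * a⁻¹ * a = a
    intro a
    refine PExp.ext' ?_ ?_
    · show a.graph ∪ a.elt • (a.elt⁻¹ • a.graph) ∪ (a.elt * a.elt⁻¹) • a.graph = a.graph
      rw [aux_smul_smul, mul_inv_cancel, aux_smul_one, aux_union_self, aux_union_self]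
    · show a.elt * a.elt⁻¹ * a.elt = a.elt
      rw [mul_inv_cancel, one_mul]
  · -- inv_inv
    intro a
    refine PExp.ext' ?_ (inv_inv _)
    show (a.elt⁻¹)⁻¹ • (a.elt⁻¹ • a.graph) = a.graph
    rw [aux_smul_smul, inv_inv, mul_inv_cancel, aux_smul_one]
  · -- mul_inv_rev
    intro a b
    refine PExp.ext' ?_ (mul_inv_rev _ _)
    show (a.elt * b.elt)⁻¹ • (a.graph ∪ a.elt • b.graph) =
      b.elt⁻¹ • b.graph ∪ b.elt⁻¹ • (a.elt⁻¹ • a.graph)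
    rw [mul_inv_rev, aux_smul_union, aux_smul_smul, aux_smul_smul, mul_assoc,
      inv_mul_cancel, mul_one, aux_union_comm]
  · -- idempotents commute
    intro e f he hf
    have he1 := (pexp_idem_iff e).1 he
    have hf1 := (pexp_idem_iff f).1 hf
    refine PExp.ext' ?_ ?_
    · show e.graph ∪ e.elt • f.graph = f.graph ∪ f.elt • e.graph
      rw [he1, hf1, aux_smul_one, aux_smul_one, aux_union_comm]
    · show e.elt * f.elt = f.elt * e.elt
      rw [he1, hf1]
  · -- surjectivity
    intro g
    exact ⟨⟨emptyG φ, g, ⟨Set.finite_empty, Set.finite_empty⟩,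
      fun v hv => absurd hv (by simp [emptyG])⟩, rfl⟩
  · -- IsMaxOp pMax
    intro a
    refine ⟨(pexp_sigma_iff _ _).2 rfl, fun b hb => ?_⟩
    refine (pexp_nle_iff _ _).2 ⟨(pexp_sigma_iff b a).1 hb, ?_⟩
    exact ⟨Set.empty_subset _, Set.empty_subset _⟩
  · -- perfect
    intro a b
    refine PExp.ext' ?_ rfl
    show emptyG φ ∪ a.elt • emptyG φ = emptyG φ
    rw [aux_smul_empty, aux_union_empty]

end FInvPaper
end
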